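/- Let M be a finite-dimensional real C^∞ manifold without boundary which is Hausdorff and σ-compact. Let n ≥ 1, let S_1,…,S_n be closed subsets of M, let U ⊆ M be open with ⋂_{j=1}^n S_j ⊆ U, and let f : M → ℝ be a C^∞ function with f ≡ 0 on each S_j and f ≡ 0 on U. Then there exist C^∞ functions a_1,…,a_n, b_1,…,b_n : M → ℝ such that f = Σ_{j=1}^n a_j·b_j, every a_j vanishes on S_1 ∪ ⋯ ∪ S_n, and every b_j vanishes on an open neighborhood of S_j. In particular f belongs to Σ_{j=1}^n (I_N ∩ I(S_j)²), where I(S) denotes the ideal of smooth functions vanishing on S and I_N = ⋂_k I(S_k). -/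

import Mathlib

/-! Statement 11: the localization lemma for the higher-vanishing ideal on a smooth manifold. -/

open Manifold

/-- Let `M` be a finite-dimensional real `C^∞` manifold (Hausdorff,
σ-compact, without boundary), `S_1, …, S_n` closed subsets, `U` open with `⋂ S_j ⊆ U`, and
`f` a smooth function vanishing on each `S_j` and on `U`.  Then `f = Σ_j a_j b_j` with `a_j`
smooth and vanishing on `S_1 ∪ ⋯ ∪ S_n` and `b_j` smooth and vanishing on an open
neighborhood of `S_j`; in particular `f ∈ Σ_j (I_N ∩ I(S_j)²)` where `I(S)` is the ideal of
smooth functions vanishing on `S` and `I_N = ⋂_l I(S_l)`. -/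
theorem stmt_11 {d : ℕ} {M : Type*} [TopologicalSpace M]
    [ChartedSpace (EuclideanSpace ℝ (Fin d)) M]
    [IsManifold (𝓡 d) (⊤ : ℕ∞) M] [T2Space M] [SigmaCompactSpace M]
    (n : ℕ) (hn : 1 ≤ n)
    (S : Fin n → Set M) (hcl : ∀ j, IsClosed (S j))
    (U : Set M) (hU : IsOpen U) (hsub : (⋂ j, S j) ⊆ U)
    (f : M → ℝ) (hf : ContMDiff (𝓡 d) 𝓘(ℝ, ℝ) (⊤ : ℕ∞) f)
    (hfS : ∀ j, ∀ x ∈ S j, f x = 0) (hfU : ∀ x ∈ U, f x = 0) :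
    (∃ a b : Fin n → M → ℝ,
      (∀ j, ContMDiff (𝓡 d) 𝓘(ℝ, ℝ) (⊤ : ℕ∞) (a j) ∧ ContMDiff (𝓡 d) 𝓘(ℝ, ℝ) (⊤ : ℕ∞) (b j)) ∧
      (∀ x, f x = ∑ j, a j x * b j x) ∧
      (∀ j, ∀ x ∈ ⋃ l, S l, a j x = 0) ∧
      (∀ j, ∃ W : Set M, IsOpen W ∧ S j ⊆ W ∧ ∀ x ∈ W, b j x = 0)) ∧
    (∃ u : Fin n → M → ℝ,
      (∀ j, ContMDiff (𝓡 d) 𝓘(ℝ, ℝ) (⊤ : ℕ∞) (u j)) ∧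
      (∀ x, f x = ∑ j, u j x) ∧
      (∀ j l, ∀ x ∈ S l, u j x = 0) ∧
      (∀ j, ∃ (mm : ℕ) (g h : Fin mm → M → ℝ),
        (∀ i, ContMDiff (𝓡 d) 𝓘(ℝ, ℝ) (⊤ : ℕ∞) (g i) ∧ ContMDiff (𝓡 d) 𝓘(ℝ, ℝ) (⊤ : ℕ∞) (h i)) ∧
        (∀ i, ∀ x ∈ S j, g i x = 0 ∧ h i x = 0) ∧
        (∀ x, u j x = ∑ i, g i x * h i x))) := by
  -- A smooth partition of unity on the closed set `Uᶜ` subordinate to the open cover `(S j)ᶜ`.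
  have hcover : Uᶜ ⊆ ⋃ j, (S j)ᶜ := by
    intro x hx
    rw [← Set.compl_iInter]
    exact fun hxS => hx (hsub hxS)
  obtain ⟨χ, hχ⟩ := SmoothPartitionOfUnity.exists_isSubordinate (𝓡 d) hU.isClosed_compl
    (fun j => (S j)ᶜ) (fun j => (hcl j).isOpen_compl) hcover
  -- χ j vanishes on S j
  have hχS : ∀ j, ∀ x ∈ S j, χ j x = 0 := by
    intro j x hx
    by_contra hne
    exact (hχ j (subset_tsupport _ hne)) hx
  -- the key sum identity
  have hsum : ∀ x, f x = ∑ j, f x * χ j x := by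
    intro x
    by_cases hx : x ∈ U
    · simp [hfU x hx]
    · have h1 : ∑ᶠ j, χ j x = 1 := χ.sum_eq_one hx
      rw [finsum_eq_sum_of_fintype] at h1
      rw [← Finset.mul_sum, h1, mul_one]
  constructor
  · refine ⟨fun _ => f, fun j => χ j, fun j => ⟨hf, (χ j).contMDiff⟩, hsum, ?_, ?_⟩
    · intro j x hx
      obtain ⟨l, hl⟩ := Set.mem_iUnion.mp hx
      exact hfS l x hl
    · intro j
      refine ⟨(tsupport (χ j))ᶜ, (isClosed_tsupport _).isOpen_compl, ?_, ?_⟩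
      · intro x hx
        exact fun hmem => (hχ j hmem) hx
      · intro x hx
        exact image_eq_zero_of_notMem_tsupport hx
  · refine ⟨fun j x => f x * χ j x, fun j => hf.mul (χ j).contMDiff, hsum, ?_, ?_⟩
    · intro j l x hx
      simp [hfS l x hx]
    · intro j
      refine ⟨1, fun _ => f, fun _ => χ j, fun _ => ⟨hf, (χ j).contMDiff⟩, ?_, ?_⟩
      · intro i x hx
        exact ⟨hfS j x hx, hχS j x hx⟩
      · intro x
        simp
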